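/- Let M ≤ N and K = N − M. Let Q = [Q1 | Q2] be an N×N real orthogonal matrix, with Q1 consisting of the first M columns and Q2 of the last K columns. Then for every N×M real matrix R, |det([R | Q2])| = |det(Q1ᵀ ⬝ R)|. -/

import Mathlib

open Matrix

noncomputable def catCols {N M K : ℕ} (h : M + K = N)
    (X : Matrix (Fin N) (Fin M) ℝ) (Y : Matrix (Fin N) (Fin K) ℝ) :
    Matrix (Fin N) (Fin N) ℝ :=
  (Matrix.fromCols X Y).submatrix id (fun j => finSumFinEquiv.symm (Fin.cast h.symm j))

lemma catCols_eq {N M K : ℕ} (h : M + K = N)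
    (X : Matrix (Fin N) (Fin M) ℝ) (Y : Matrix (Fin N) (Fin K) ℝ) :
    catCols h X Y = (Matrix.fromCols X Y).submatrix id
      ((finCongr h.symm).trans finSumFinEquiv.symm) := rfl

lemma key {M N K : ℕ} (hK : M + K = N)
    (Q1 : Matrix (Fin N) (Fin M) ℝ) (Q2 : Matrix (Fin N) (Fin K) ℝ)
    (X : Matrix (Fin N) (Fin M) ℝ) (Y : Matrix (Fin N) (Fin K) ℝ) :
    (catCols hK Q1 Q2)ᵀ * catCols hK X Y =
      (fromBlocks (Q1ᵀ * X) (Q1ᵀ * Y) (Q2ᵀ * X) (Q2ᵀ * Y)).submatrix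
        ((finCongr hK.symm).trans finSumFinEquiv.symm)
        ((finCongr hK.symm).trans finSumFinEquiv.symm) := by
  set e := (finCongr hK.symm).trans finSumFinEquiv.symm
  rw [catCols_eq, catCols_eq, transpose_submatrix, transpose_fromCols]
  have : (fromRows Q1ᵀ Q2ᵀ).submatrix (⇑e) id * (fromCols X Y).submatrix id (⇑e)
      = (fromRows Q1ᵀ Q2ᵀ * fromCols X Y).submatrix (⇑e) (⇑e) := by
    have := submatrix_mul_equiv (fromRows Q1ᵀ Q2ᵀ) (fromCols X Y)
      (⇑e) (Equiv.refl (Fin N)) (⇑e)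
    simpa using this
  rw [this, fromRows_mul_fromCols]

/-- if `Q = [Q1 | Q2]` is an `N × N` orthogonal matrix (`Q1` the first `M`
columns, `Q2` the last `K`), then for every `N × M` matrix `R`,
`|det [R | Q2]| = |det (Q1ᵀ * R)|`. -/
theorem statement2 {M N K : ℕ} (hK : M + K = N)
    (Q1 : Matrix (Fin N) (Fin M) ℝ) (Q2 : Matrix (Fin N) (Fin K) ℝ)
    (hQ : (catCols hK Q1 Q2)ᵀ * (catCols hK Q1 Q2) = 1)
    (R : Matrix (Fin N) (Fin M) ℝ) :
    |(catCols hK R Q2).det| = |(Q1ᵀ * R).det| := by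
  set e := (finCongr hK.symm).trans finSumFinEquiv.symm with he
  have hblocks : fromBlocks (Q1ᵀ * Q1) (Q1ᵀ * Q2) (Q2ᵀ * Q1) (Q2ᵀ * Q2)
      = (1 : Matrix (Fin M ⊕ Fin K) (Fin M ⊕ Fin K) ℝ) := by
    have h1 := hQ
    rw [key hK Q1 Q2 Q1 Q2] at h1
    have := congrArg (fun A => A.submatrix (⇑e.symm) (⇑e.symm)) h1
    simp only [← he, Matrix.submatrix_submatrix, Equiv.self_comp_symm,
      Matrix.submatrix_id_id, Matrix.submatrix_one_equiv] at this
    exact this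
  have h12 : Q1ᵀ * Q2 = 0 := by
    have := congrArg Matrix.toBlocks₁₂ hblocks
    simpa [← Matrix.fromBlocks_one] using this
  have h22 : Q2ᵀ * Q2 = 1 := by
    have := congrArg Matrix.toBlocks₂₂ hblocks
    simpa [← Matrix.fromBlocks_one] using this
  have hdetQ : |(catCols hK Q1 Q2).det| = 1 := by
    have := congrArg Matrix.det hQ
    rw [Matrix.det_mul, Matrix.det_transpose, Matrix.det_one] at this
    rcases mul_self_eq_one_iff.mp this with h | h <;> simp [h]
  have hprod := key hK Q1 Q2 R Q2
  have hdet : (catCols hK Q1 Q2)ᵀ.det * (catCols hK R Q2).det = (Q1ᵀ * R).det := by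
    have := congrArg Matrix.det hprod
    rw [Matrix.det_mul] at this
    rw [this, Matrix.det_submatrix_equiv_self, h12, h22,
      Matrix.det_fromBlocks_zero₁₂, Matrix.det_one, mul_one]
  calc |(catCols hK R Q2).det|
      = |(catCols hK Q1 Q2)ᵀ.det| * |(catCols hK R Q2).det| := by
        rw [Matrix.det_transpose, hdetQ, one_mul]
    _ = |(Q1ᵀ * R).det| := by rw [← abs_mul, hdet]
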